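/- Let r ≥ 1 and N ≥ 1. Let H be a real N×r² matrix and suppose there are constants σ > 0 and κ ≥ 1 with σ‖u‖ ≤ ‖H u‖ ≤ κσ‖u‖ for every u ∈ ℝ^{r²}. Let B be a nonzero real r×r matrix satisfying ‖B‖₂² ≥ (α/κ⁴)·‖B‖_F² for some 0 < α ≤ κ⁴. Then there exist vectors p, q ∈ ℝ^r such that ‖H·vec(p qᵀ) − H·vec(B)‖² ≤ κ²·(1 − α/κ⁴)·‖H·vec(B)‖², where vec denotes the vectorization of an r×r matrix into ℝ^{r²} and the norms on vectors are Euclidean. -/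

import Mathlib

open Matrix

/-- The Euclidean norm of a real vector. -/
noncomputable def euclNorm {n : Type*} [Fintype n] (v : n → ℝ) : ℝ :=
  Real.sqrt (∑ i, v i ^ 2)

/-- The Frobenius norm of a real matrix. -/
noncomputable def frobNorm {m n : Type*} [Fintype m] [Fintype n] (M : Matrix m n ℝ) : ℝ :=
  Real.sqrt (∑ i, ∑ j, M i j ^ 2)

/-- The spectral norm of a real matrix (operator norm induced by Euclidean norms). -/
noncomputable def specNorm {m n : Type*} [Fintype m] [Fintype n] (M : Matrix m n ℝ) : ℝ :=
  sSup {x : ℝ | ∃ v : n → ℝ, euclNorm v = 1 ∧ x = euclNorm (M.mulVec v)}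

/-- Vectorization of an `r × r` matrix into `ℝ^{r²}` (indexed by pairs). -/
def vec {r : ℕ} (X : Matrix (Fin r) (Fin r) ℝ) : Fin r × Fin r → ℝ :=
  fun ij => X ij.1 ij.2

lemma euclNorm_nonneg' {n : Type*} [Fintype n] (v : n → ℝ) : 0 ≤ euclNorm v :=
  Real.sqrt_nonneg _

lemma euclNorm_sq' {n : Type*} [Fintype n] (v : n → ℝ) :
    euclNorm v ^ 2 = ∑ i, v i ^ 2 :=
  Real.sq_sqrt (Finset.sum_nonneg fun _ _ => sq_nonneg _)

lemma continuous_euclNorm' {n : Type*} [Fintype n] : Continuous (euclNorm (n := n)) :=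
  Real.continuous_sqrt.comp (continuous_finset_sum _ fun i _ => (continuous_apply i).pow 2)

/-- the paper's Corollary A.3: if `H` has full column rank with condition
number at most `κ` and the nonzero matrix `B` satisfies `‖B‖₂² ≥ (α/κ⁴)‖B‖_F²`, then
replacing `B` by its best rank-1 approximation `p qᵀ` changes `H · _root_.vec(B)` by a relative
squared error at most `κ²(1 − α/κ⁴)`. -/
theorem rank_one_replacement_error (r N : ℕ) (hr : 1 ≤ r) (hN : 1 ≤ N)
    (H : Matrix (Fin N) (Fin r × Fin r) ℝ)
    (σ κ : ℝ) (hσ : 0 < σ) (hκ : 1 ≤ κ)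
    (hHlow : ∀ u : Fin r × Fin r → ℝ, σ * euclNorm u ≤ euclNorm (H.mulVec u))
    (hHup : ∀ u : Fin r × Fin r → ℝ, euclNorm (H.mulVec u) ≤ κ * σ * euclNorm u)
    (B : Matrix (Fin r) (Fin r) ℝ) (hB : B ≠ 0)
    (α : ℝ) (hα0 : 0 < α) (hα1 : α ≤ κ ^ 4)
    (hBspec : (α / κ ^ 4) * frobNorm B ^ 2 ≤ specNorm B ^ 2) :
    ∃ p q : Fin r → ℝ,
      euclNorm (H.mulVec (_root_.vec (vecMulVec p q)) - H.mulVec (_root_.vec B)) ^ 2 ≤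
        κ ^ 2 * (1 - α / κ ^ 4) * euclNorm (H.mulVec (_root_.vec B)) ^ 2 := by
  classical
  -- the unit sphere is compact
  set T : Set (Fin r → ℝ) := {v | euclNorm v = 1} with hTdef
  have hclosed : IsClosed T := isClosed_eq continuous_euclNorm' continuous_const
  have hbdd : Bornology.IsBounded T := by
    rw [isBounded_iff_forall_norm_le]
    refine ⟨1, fun v hv => ?_⟩
    rw [pi_norm_le_iff_of_nonneg zero_le_one]
    intro i
    have hv1 : euclNorm v = 1 := hv
    have hsum : ∑ j, v j ^ 2 = 1 := by rw [← euclNorm_sq' v, hv1]; norm_num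
    have h1 : v i ^ 2 ≤ 1 := by
      calc v i ^ 2 ≤ ∑ j, v j ^ 2 :=
            Finset.single_le_sum (f := fun j => v j ^ 2) (fun j _ => sq_nonneg _)
              (Finset.mem_univ i)
        _ = 1 := hsum
    rw [Real.norm_eq_abs]
    nlinarith [abs_nonneg (v i), sq_abs (v i)]
  have hcomp : IsCompact T := Metric.isCompact_of_isClosed_isBounded hclosed hbdd
  -- a point on the sphere
  set e0 : Fin r → ℝ := Pi.single (⟨0, hr⟩ : Fin r) 1 with he0def
  have he0 : e0 ∈ T := by
    show euclNorm e0 = 1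
    have : ∑ i, e0 i ^ 2 = 1 := by
      simp [he0def, Pi.single_apply]
    simp [euclNorm, this]
  -- maximize v ↦ ‖B v‖ over the sphere
  have hcont : Continuous fun v : Fin r → ℝ => euclNorm (B.mulVec v) := by
    refine continuous_euclNorm'.comp (continuous_pi fun i => ?_)
    simpa [Matrix.mulVec, dotProduct] using
      (continuous_finset_sum Finset.univ fun j _ =>
        (continuous_const.mul (continuous_apply j) :
          Continuous fun v : Fin r → ℝ => B i j * v j))
  obtain ⟨q, hqT, hqmax'⟩ := hcomp.exists_isMaxOn ⟨e0, he0⟩ hcont.continuousOn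
  have hqmax : ∀ v ∈ T, euclNorm (B.mulVec v) ≤ euclNorm (B.mulVec q) :=
    fun v hv => hqmax' hv
  have hq1 : euclNorm q = 1 := hqT
  have hqsum : ∑ j, q j ^ 2 = 1 := by rw [← euclNorm_sq' q, hq1]; norm_num
  set p : Fin r → ℝ := B.mulVec q with hpdef
  refine ⟨p, q, ?_⟩
  -- specNorm bounds
  have hub : ∀ x ∈ {x : ℝ | ∃ v : Fin r → ℝ, euclNorm v = 1 ∧ x = euclNorm (B.mulVec v)},
      x ≤ euclNorm p := by
    rintro x ⟨v, hv, rfl⟩; exact hqmax v hv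
  have hspec_le : specNorm B ≤ euclNorm p := by
    rw [specNorm]
    exact csSup_le ⟨euclNorm (B.mulVec e0), e0, he0, rfl⟩ hub
  have hspec_ge0 : (0 : ℝ) ≤ specNorm B := by
    rw [specNorm]
    exact le_trans (euclNorm_nonneg' (B.mulVec e0))
      (le_csSup ⟨euclNorm p, hub⟩ ⟨e0, he0, rfl⟩)
  have hspec_sq : specNorm B ^ 2 ≤ euclNorm p ^ 2 := by
    have := euclNorm_nonneg' p
    nlinarith
  -- p i = ∑ j, B i j * q j
  have hp : ∀ i, p i = ∑ j, B i j * q j := by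
    intro i; simp [hpdef, Matrix.mulVec, dotProduct]
  -- the key Frobenius identity
  have key : ∑ i, ∑ j, (p i * q j - B i j) ^ 2
      = (∑ i, ∑ j, B i j ^ 2) - ∑ i, p i ^ 2 := by
    rw [← Finset.sum_sub_distrib]
    refine Finset.sum_congr rfl fun i _ => ?_
    have e : ∀ j, (p i * q j - B i j) ^ 2
        = p i ^ 2 * q j ^ 2 - 2 * p i * (B i j * q j) + B i j ^ 2 := fun j => by ring
    simp_rw [e]
    rw [Finset.sum_add_distrib, Finset.sum_sub_distrib, ← Finset.mul_sum, ← Finset.mul_sum,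
      hqsum, ← hp i]
    ring
  -- norms as sums
  have hκ4 : (0 : ℝ) < κ ^ 4 := by positivity
  have hfrob : frobNorm B ^ 2 = ∑ i, ∑ j, B i j ^ 2 :=
    Real.sq_sqrt (Finset.sum_nonneg fun _ _ => Finset.sum_nonneg fun _ _ => sq_nonneg _)
  have hpsum : euclNorm p ^ 2 = ∑ i, p i ^ 2 := euclNorm_sq' p
  -- the difference vector
  set u : Fin r × Fin r → ℝ := _root_.vec (vecMulVec p q) - _root_.vec B with hudef
  have hHu : H.mulVec (_root_.vec (vecMulVec p q)) - H.mulVec (_root_.vec B) = H.mulVec u := by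
    rw [hudef, Matrix.mulVec_sub]
  have husq : euclNorm u ^ 2 = (∑ i, ∑ j, B i j ^ 2) - ∑ i, p i ^ 2 := by
    rw [euclNorm_sq', ← key, Fintype.sum_prod_type]
    refine Finset.sum_congr rfl fun i _ => Finset.sum_congr rfl fun j _ => ?_
    simp [hudef, _root_.vec, vecMulVec]
  have hBsq : euclNorm (_root_.vec B) ^ 2 = ∑ i, ∑ j, B i j ^ 2 := by
    rw [euclNorm_sq', Fintype.sum_prod_type]
    exact Finset.sum_congr rfl fun i _ => Finset.sum_congr rfl fun j _ => rfl
  -- squared operator bounds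
  have hup : euclNorm (H.mulVec u) ^ 2 ≤ (κ * σ) ^ 2 * euclNorm u ^ 2 := by
    have h := hHup u
    have h0 := euclNorm_nonneg' (H.mulVec u)
    have h1 := euclNorm_nonneg' u
    nlinarith
  have hlow : σ ^ 2 * euclNorm (_root_.vec B) ^ 2 ≤ euclNorm (H.mulVec (_root_.vec B)) ^ 2 := by
    have h2 : (0:ℝ) ≤ σ * euclNorm (_root_.vec B) :=
      mul_nonneg hσ.le (euclNorm_nonneg' _)
    calc σ ^ 2 * euclNorm (_root_.vec B) ^ 2 = (σ * euclNorm (_root_.vec B)) ^ 2 := by ring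
      _ ≤ euclNorm (H.mulVec (_root_.vec B)) ^ 2 := pow_le_pow_left₀ h2 (hHlow (_root_.vec B)) 2
  -- spectral hypothesis gives a lower bound on ∑ p²
  have hplow : (α / κ ^ 4) * (∑ i, ∑ j, B i j ^ 2) ≤ ∑ i, p i ^ 2 := by
    calc (α / κ ^ 4) * (∑ i, ∑ j, B i j ^ 2) = (α / κ ^ 4) * frobNorm B ^ 2 := by rw [hfrob]
      _ ≤ specNorm B ^ 2 := hBspec
      _ ≤ euclNorm p ^ 2 := hspec_sq
      _ = ∑ i, p i ^ 2 := hpsum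
  -- assemble
  rw [hHu]
  have hBsum_nonneg : (0 : ℝ) ≤ ∑ i, ∑ j, B i j ^ 2 :=
    Finset.sum_nonneg fun _ _ => Finset.sum_nonneg fun _ _ => sq_nonneg _
  have hα4 : α / κ ^ 4 ≤ 1 := (div_le_one hκ4).mpr hα1
  calc euclNorm (H.mulVec u) ^ 2
      ≤ (κ * σ) ^ 2 * euclNorm u ^ 2 := hup
    _ = κ ^ 2 * σ ^ 2 * ((∑ i, ∑ j, B i j ^ 2) - ∑ i, p i ^ 2) := by rw [husq]; ring
    _ ≤ κ ^ 2 * σ ^ 2 * ((1 - α / κ ^ 4) * (∑ i, ∑ j, B i j ^ 2)) := by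
        have hκσ : (0:ℝ) ≤ κ ^ 2 * σ ^ 2 := by positivity
        have : (∑ i, ∑ j, B i j ^ 2) - ∑ i, p i ^ 2
            ≤ (1 - α / κ ^ 4) * (∑ i, ∑ j, B i j ^ 2) := by nlinarith
        exact mul_le_mul_of_nonneg_left this hκσ
    _ = κ ^ 2 * (1 - α / κ ^ 4) * (σ ^ 2 * euclNorm (_root_.vec B) ^ 2) := by rw [hBsq]; ring
    _ ≤ κ ^ 2 * (1 - α / κ ^ 4) * euclNorm (H.mulVec (_root_.vec B)) ^ 2 := by
        have h1 : (0:ℝ) ≤ κ ^ 2 * (1 - α / κ ^ 4) := by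
          have := sub_nonneg.mpr hα4; positivity
        exact mul_le_mul_of_nonneg_left hlow h1
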